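/- Let φ : ℝ → ℝ be continuously differentiable. Then lim_{ε→0⁺} ∫_{1/2}^{1} f_ε(x) (φ(x) − φ(1)) dx = 0, where f_ε(x) = b_ε/(x(1−x)+ε) with b_ε = c⁺(ε)/ln((c⁺(ε)+1/2)/(c⁺(ε)−1/2)) and c⁺(ε) = √(1/4 + ε). -/

import Mathlib

open MeasureTheory Topology Filter

/-- `c⁺(ε) = √(1/4 + ε)`. -/
noncomputable def cplus (ε : ℝ) : ℝ := Real.sqrt (1/4 + ε)

/-- The normalization constant `b_ε = c⁺(ε)/log((c⁺(ε)+1/2)/(c⁺(ε)−1/2))`. -/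
noncomputable def bconst (ε : ℝ) : ℝ :=
  cplus ε / Real.log ((cplus ε + 1/2) / (cplus ε - 1/2))

/-- The viscous steady state `f_ε(x) = b_ε/(x(1−x)+ε)`. -/
noncomputable def fvisc (ε x : ℝ) : ℝ := bconst ε / (x * (1 - x) + ε)

lemma cplus_tendsto : Tendsto cplus (𝓝[>] (0:ℝ)) (𝓝 (1/2)) := by
  have : Tendsto (fun ε : ℝ => Real.sqrt (1/4 + ε)) (𝓝 0) (𝓝 (Real.sqrt (1/4 + 0))) := by
    exact (Real.continuous_sqrt.comp (continuous_const.add continuous_id)).tendsto 0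
  have h2 : Real.sqrt (1/4 + 0) = 1/2 := by
    rw [add_zero]
    rw [show (1/4 : ℝ) = (1/2)^2 by norm_num, Real.sqrt_sq (by norm_num)]
  rw [h2] at this
  exact this.mono_left nhdsWithin_le_nhds

lemma cplus_gt (ε : ℝ) (hε : 0 < ε) : 1/2 < cplus ε := by
  show (1/2:ℝ) < Real.sqrt (1/4 + ε)
  have h : Real.sqrt ((1/2:ℝ)^2) < Real.sqrt (1/4 + ε) :=
    Real.sqrt_lt_sqrt (by positivity) (by norm_num; linarith)
  rwa [Real.sqrt_sq (by norm_num : (0:ℝ) ≤ 1/2)] at h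

lemma bconst_tendsto : Tendsto bconst (𝓝[>] (0:ℝ)) (𝓝 0) := by
  have hsub : Tendsto (fun ε => cplus ε - 1/2) (𝓝[>] (0:ℝ)) (𝓝[>] 0) := by
    apply tendsto_nhdsWithin_of_tendsto_nhds_of_eventually_within
    · have := cplus_tendsto.sub_const (1/2)
      simpa using this
    · filter_upwards [self_mem_nhdsWithin] with ε hε
      exact sub_pos.mpr (cplus_gt ε hε)
  have hlog2 : Tendsto (fun ε => Real.log (cplus ε - 1/2)) (𝓝[>] (0:ℝ)) atBot :=
    Real.tendsto_log_nhdsGT_zero.comp hsub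
  have hlog1 : Tendsto (fun ε => Real.log (cplus ε + 1/2)) (𝓝[>] (0:ℝ)) (𝓝 (Real.log 1)) := by
    apply (Real.continuousAt_log (by norm_num : (1:ℝ) ≠ 0)).tendsto.comp
    have := cplus_tendsto.add_const (1/2)
    norm_num at this ⊢
    exact this
  have hlog : Tendsto (fun ε => Real.log ((cplus ε + 1/2) / (cplus ε - 1/2)))
      (𝓝[>] (0:ℝ)) atTop := by
    have key : Tendsto (fun ε => Real.log (cplus ε + 1/2) - Real.log (cplus ε - 1/2))
        (𝓝[>] (0:ℝ)) atTop := hlog1.add_atTop (tendsto_neg_atBot_atTop.comp hlog2)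
    apply key.congr'
    filter_upwards [self_mem_nhdsWithin] with ε hε
    have h1 : (0:ℝ) < cplus ε + 1/2 := by have := cplus_gt ε hε; linarith
    have h2 : (0:ℝ) < cplus ε - 1/2 := sub_pos.mpr (cplus_gt ε hε)
    rw [Real.log_div h1.ne' h2.ne']
  exact Tendsto.div_atTop cplus_tendsto hlog

/-- For `φ` continuously differentiable,
`lim_{ε→0⁺} ∫_{1/2}^1 f_ε(x)(φ(x) − φ(1)) dx = 0`. -/
theorem tendsto_integral_fvisc_sub_right (φ : ℝ → ℝ) (hφ : ContDiff ℝ 1 φ) :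
    Tendsto (fun ε : ℝ => ∫ x in (1/2:ℝ)..1, fvisc ε x * (φ x - φ 1))
      (𝓝[>] (0:ℝ)) (𝓝 0) := by
  -- get a Lipschitz bound on [1/2, 1]
  have hderiv : ContinuousOn (deriv φ) (Set.Icc (1/2:ℝ) 1) :=
    (hφ.continuous_deriv le_rfl).continuousOn
  obtain ⟨C, hC⟩ := isCompact_Icc.exists_bound_of_continuousOn hderiv
  have hC0 : 0 ≤ C := le_trans (norm_nonneg _) (hC 1 (by norm_num))
  have hlip : ∀ x ∈ Set.Icc (1/2:ℝ) 1, |φ x - φ 1| ≤ C * (1 - x) := by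
    intro x hx
    have := (convex_Icc (1/2:ℝ) 1).norm_image_sub_le_of_norm_deriv_le
      (f := φ) (fun y _ => hφ.differentiable one_ne_zero y) hC (by norm_num : (1:ℝ) ∈ Set.Icc (1/2:ℝ) 1) hx
    rw [Real.norm_eq_abs, Real.norm_eq_abs] at this
    calc |φ x - φ 1| ≤ C * |x - 1| := this
      _ = C * (1 - x) := by rw [abs_sub_comm, abs_of_nonneg (by linarith [hx.2])]
  -- squeeze
  apply squeeze_zero_norm' (a := fun ε => C * |bconst ε|)
  · filter_upwards [self_mem_nhdsWithin] with ε hε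
    have key : ∀ x ∈ Set.uIoc (1/2:ℝ) 1, ‖fvisc ε x * (φ x - φ 1)‖ ≤ 2 * C * |bconst ε| := by
      intro x hx
      rw [Set.uIoc_of_le (by norm_num)] at hx
      have hε' : (0:ℝ) < ε := hε
      have hx1 : (1/2:ℝ) < x := hx.1
      have hx2 : x ≤ 1 := hx.2
      have hd : (0:ℝ) < x * (1 - x) + ε := by nlinarith
      have hratio : (1 - x) / (x * (1 - x) + ε) ≤ 2 := by
        rw [div_le_iff₀ hd]; nlinarith
      have hφb := hlip x ⟨le_of_lt hx1, hx2⟩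
      rw [norm_mul, Real.norm_eq_abs, Real.norm_eq_abs, fvisc, abs_div,
        abs_of_pos hd]
      calc |bconst ε| / (x * (1 - x) + ε) * |φ x - φ 1|
          ≤ |bconst ε| / (x * (1 - x) + ε) * (C * (1 - x)) := by
            apply mul_le_mul_of_nonneg_left hφb (by positivity)
        _ = |bconst ε| * C * ((1 - x) / (x * (1 - x) + ε)) := by ring
        _ ≤ |bconst ε| * C * 2 := by
            apply mul_le_mul_of_nonneg_left hratio (by positivity)
        _ = 2 * C * |bconst ε| := by ring
    calc ‖∫ x in (1/2:ℝ)..1, fvisc ε x * (φ x - φ 1)‖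
        ≤ 2 * C * |bconst ε| * |1 - 1/2| :=
          intervalIntegral.norm_integral_le_of_norm_le_const key
      _ = C * |bconst ε| := by rw [show |1 - (1/2:ℝ)| = 1/2 by norm_num]; ring
  · have h := bconst_tendsto.abs
    rw [abs_zero] at h
    simpa using h.const_mul C
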